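/- Fix K > 0, Δ ∈ ℝ, and η₁, η₂ ∈ ℝ with η₁·η₂ ≠ 0. Define Γ(K', x) = −K'·η₁·η₂ / ( (x+Δ)·(x+Δ+η₁)·(x+Δ+η₂) ). Then lim_{x → ∞} Γ(4K, 2x) / Γ(K, x) = 1/2. (Doubling the liquidity of the constant product CFMM—quadrupling K and doubling the reserve level x—asymptotically halves the privacy fee for a fixed trade Δ and fixed two-point noise.) -/

import Mathlib

open Filter

lemma aux_tendsto (a : ℝ) :
    Tendsto (fun x : ℝ => (x + a) / (2 * x + a)) atTop (nhds (1 / 2)) := by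
  have h0 : Tendsto (fun x : ℝ => a / x) atTop (nhds 0) :=
    tendsto_const_nhds.div_atTop tendsto_id
  have h1 : Tendsto (fun x : ℝ => (1 + a / x) / (2 + a / x)) atTop (nhds (1 / 2)) := by
    have c1 : Tendsto (fun _ : ℝ => (1:ℝ)) atTop (nhds 1) := tendsto_const_nhds
    have c2 : Tendsto (fun _ : ℝ => (2:ℝ)) atTop (nhds 2) := tendsto_const_nhds
    have := (c1.add h0).div (c2.add h0) (by norm_num : (2 : ℝ) + 0 ≠ 0)
    convert this using 2 <;> norm_num
  refine h1.congr' ?_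
  filter_upwards [eventually_gt_atTop 0, eventually_gt_atTop (|a|)] with x hx hxa
  have hx0 : x ≠ 0 := ne_of_gt hx
  have h2 : 2 * x + a ≠ 0 := by nlinarith [neg_abs_le a]
  field_simp

/-- Doubling the liquidity of the constant product CFMM (quadrupling `K` and
doubling the reserve level `x`) asymptotically halves the privacy fee for a fixed
trade `Δ` and fixed two-point noise: `lim_{x → ∞} Γ(4K, 2x) / Γ(K, x) = 1/2`. -/
theorem doubling_liquidity_halves_fee
    (K Δ η₁ η₂ : ℝ) (hK : 0 < K) (hη : η₁ * η₂ ≠ 0)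
    (Γ : ℝ → ℝ → ℝ)
    (hΓ : ∀ K' x : ℝ, Γ K' x
      = -K' * η₁ * η₂ / ((x + Δ) * (x + Δ + η₁) * (x + Δ + η₂))) :
    Tendsto (fun x : ℝ => Γ (4 * K) (2 * x) / Γ K x) atTop (nhds (1 / 2)) := by
  have hK0 : K ≠ 0 := ne_of_gt hK
  have hlim : Tendsto (fun x : ℝ =>
      4 * ((x + Δ) / (2 * x + Δ)) * ((x + Δ + η₁) / (2 * x + Δ + η₁))
        * ((x + Δ + η₂) / (2 * x + Δ + η₂))) atTop (nhds (1 / 2)) := by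
    have t1 := aux_tendsto Δ
    have t2 := aux_tendsto (Δ + η₁)
    have t3 := aux_tendsto (Δ + η₂)
    have c4 : Tendsto (fun _ : ℝ => (4:ℝ)) atTop (nhds 4) := tendsto_const_nhds
    have := ((c4.mul t1).mul t2).mul t3
    have h4 : (4 : ℝ) * (1 / 2) * (1 / 2) * (1 / 2) = 1 / 2 := by norm_num
    rw [h4] at this
    refine this.congr fun x => ?_
    ring_nf
  refine hlim.congr' ?_
  filter_upwards [eventually_gt_atTop (|Δ| + |η₁| + |η₂|)] with x hx
  have hΔ : 0 < x + Δ := by nlinarith [neg_abs_le Δ, abs_nonneg η₁, abs_nonneg η₂]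
  have h1 : 0 < x + Δ + η₁ := by
    nlinarith [neg_abs_le Δ, neg_abs_le η₁, abs_nonneg η₂]
  have h2 : 0 < x + Δ + η₂ := by
    nlinarith [neg_abs_le Δ, neg_abs_le η₂, abs_nonneg η₁]
  have hx0 : 0 < x := by nlinarith [abs_nonneg Δ, abs_nonneg η₁, abs_nonneg η₂]
  have hΔ' : 0 < 2 * x + Δ := by nlinarith
  have h1' : 0 < 2 * x + Δ + η₁ := by nlinarith
  have h2' : 0 < 2 * x + Δ + η₂ := by nlinarith
  have hη₁ : η₁ ≠ 0 := fun h => hη (by simp [h])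
  have hη₂ : η₂ ≠ 0 := fun h => hη (by simp [h])
  rw [hΓ, hΓ]
  have e1 : (2 : ℝ) * x + Δ + η₁ = 2 * x + (Δ + η₁) := by ring
  have e2 : (2 : ℝ) * x + Δ + η₂ = 2 * x + (Δ + η₂) := by ring
  field_simp
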